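/- arXiv:2001.08052 — 2 statements merged into one kernel-verified Lean document; each statement's English description precedes it below -/
import Mathlib

section
/- Let G be cyclic of prime order p, k of characteristic p, V a kG-module and W an indecomposable kG-module of dimension n ≥ 2. If Δ^{p-1}(f) ∈ k[V]^G is an indecomposable homogeneous transfer (i.e., it does not lie in the subalgebra generated by invariants of strictly smaller degree), then the transfer covariant h = Δ^{p-n}(f) w_1 + ⋯ + Δ^{p-1}(f) w_n is an indecomposable covariant, i.e., h ∉ k[V]^G_+ · (k[V] ⊗ W)^G restricted to lower degrees. -/
open MvPolynomial TensorProduct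

/-- Index type for the variables of `k[V]` where `V = ⊕_{j<m} V_{nj j}`. -/
abbrev Idx (m : ℕ) (nj : Fin m → ℕ) := Σ j : Fin m, Fin (nj j)

/-- The action of the generator σ on `k[V]`:
`σ (x_{i,j}) = x_{i,j} + x_{i+1,j}` (and `σ` fixes the last variable of each block). -/
noncomputable def sigmaAct (k : Type*) [CommRing k] {m : ℕ} (nj : Fin m → ℕ) :
    MvPolynomial (Idx m nj) k →ₐ[k] MvPolynomial (Idx m nj) k :=
  aeval (fun v => X v + if h : v.2.1 + 1 < nj v.1 then X ⟨v.1, ⟨v.2.1 + 1, h⟩⟩ else 0)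

/-- Δ = σ - 1 as a `k`-linear endomorphism of `k[V]`. -/
noncomputable def Del (k : Type*) [CommRing k] {m : ℕ} (nj : Fin m → ℕ) :
    MvPolynomial (Idx m nj) k →ₗ[k] MvPolynomial (Idx m nj) k :=
  (sigmaAct k nj).toLinearMap - LinearMap.id

/-- The ring of invariants `k[V]^G` (fixed points of the generator σ). -/
noncomputable def invar (k : Type*) [CommRing k] {m : ℕ} (nj : Fin m → ℕ) :
    Subalgebra k (MvPolynomial (Idx m nj) k) :=
  AlgHom.equalizer (sigmaAct k nj) (AlgHom.id k _)

/-- Matrix of σ on the indecomposable module `W = V_n` in the basis `w_1,…,w_n`,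
with `σ • w_i = ∑_{j ≤ i} (-1)^{i-j} w_j`. -/
def sigmaWMat (k : Type*) [CommRing k] (n : ℕ) : Matrix (Fin n) (Fin n) k :=
  fun a b => if a ≤ b then (-1 : k) ^ ((b : ℕ) - (a : ℕ)) else 0

/-- σ acting on `W = V_n`. -/
noncomputable def sigmaW (k : Type*) [CommRing k] (n : ℕ) : (Fin n → k) →ₗ[k] (Fin n → k) :=
  Matrix.toLin' (sigmaWMat k n)

/-- σ acting diagonally on `k[V] ⊗ W`. -/
noncomputable def sigmaCov (k : Type*) [CommRing k] {m : ℕ} (nj : Fin m → ℕ) (n : ℕ) :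
    (MvPolynomial (Idx m nj) k ⊗[k] (Fin n → k)) →ₗ[k]
      (MvPolynomial (Idx m nj) k ⊗[k] (Fin n → k)) :=
  TensorProduct.map (sigmaAct k nj).toLinearMap (sigmaW k n)

/-- A covariant is a `G`-invariant element of `k[V] ⊗ W`. -/
def IsCovariant (k : Type*) [CommRing k] {m : ℕ} (nj : Fin m → ℕ) {n : ℕ}
    (h : MvPolynomial (Idx m nj) k ⊗[k] (Fin n → k)) : Prop :=
  sigmaCov k nj n h = h

/-- Elements of `k[V] ⊗ W` which are homogeneous of degree `d`. -/
def tensorHomog (k : Type*) [CommRing k] {m : ℕ} (nj : Fin m → ℕ) (n : ℕ) (d : ℕ) :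
    Set (MvPolynomial (Idx m nj) k ⊗[k] (Fin n → k)) :=
  {x | x ∈ Submodule.span k
    {y | ∃ f w, MvPolynomial.IsHomogeneous f d ∧ y = f ⊗ₜ[k] w}}


/-- `h` is decomposable: it lies in `k[V]^G_+ ⋅ (k[V] ⊗ W)^G`. -/
def IsDecomposableCov (k : Type*) [CommRing k] {m : ℕ} (nj : Fin m → ℕ) (n : ℕ)
    (h : MvPolynomial (Idx m nj) k ⊗[k] (Fin n → k)) : Prop :=
  h ∈ Submodule.span k
    {y | ∃ q x, q ∈ invar k nj ∧ (∃ e, 0 < e ∧ MvPolynomial.IsHomogeneous q e) ∧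
      IsCovariant k nj x ∧ y = q • x}

/-- A transfer covariant: `Δ^k(f) w_1 + Δ^{k+1}(f) w_2 + ⋯ + Δ^{p-1}(f) w_s`. -/
noncomputable def transferCov (k : Type*) [CommRing k] {m : ℕ} (nj : Fin m → ℕ) (n : ℕ)
    (p s : ℕ) (f : MvPolynomial (Idx m nj) k) :
    MvPolynomial (Idx m nj) k ⊗[k] (Fin n → k) :=
  ∑ i : Fin n, (if (i : ℕ) < s then ((Del k nj) ^ (p - s + (i : ℕ))) f else 0) ⊗ₜ[k]
    Pi.single i 1

def IsTransferCovariant (k : Type*) [CommRing k] {m : ℕ} (nj : Fin m → ℕ) (n : ℕ) (p : ℕ)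
    (h : MvPolynomial (Idx m nj) k ⊗[k] (Fin n → k)) : Prop :=
  ∃ f s, 0 < s ∧ s ≤ n ∧ s ≤ p ∧ h = transferCov k nj n p s f

/-- The module of covariants is generated over `k[V]^G` in degrees ≤ d. -/
def CovGenLE (k : Type*) [CommRing k] {m : ℕ} (nj : Fin m → ℕ) (n : ℕ) (d : ℕ) : Prop :=
  ∀ x, IsCovariant k nj x → x ∈ Submodule.span k
    {y | ∃ q z, q ∈ invar k nj ∧ IsCovariant k nj z ∧
      (∃ e ≤ d, z ∈ tensorHomog k nj n e) ∧ y = q • z}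

/-- `k[V]` is generated as a `k[V]^G`-module in degrees ≤ d. -/
def PolyGenLE (k : Type*) [CommRing k] {m : ℕ} (nj : Fin m → ℕ) (d : ℕ) : Prop :=
  ∀ f : MvPolynomial (Idx m nj) k, f ∈ Submodule.span k
    {y | ∃ q g, q ∈ invar k nj ∧ (∃ e ≤ d, MvPolynomial.IsHomogeneous g e) ∧ y = q * g}

/-- `k[V]^G` is generated as a `k`-algebra in degrees ≤ d. -/
def AlgGenLE (k : Type*) [CommRing k] {m : ℕ} (nj : Fin m → ℕ) (d : ℕ) : Prop :=
  ∀ f ∈ invar k nj, f ∈ Algebra.adjoin k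
    {g | g ∈ invar k nj ∧ ∃ e ≤ d, MvPolynomial.IsHomogeneous g e}

/-- Noether bound of the module of covariants over `k[V]^G`. -/
noncomputable def betaCov (k : Type*) [CommRing k] {m : ℕ} (nj : Fin m → ℕ) (n : ℕ) : ℕ :=
  sInf {d | CovGenLE k nj n d}

noncomputable def betaPolyMod (k : Type*) [CommRing k] {m : ℕ} (nj : Fin m → ℕ) : ℕ :=
  sInf {d | PolyGenLE k nj d}

noncomputable def betaAlg (k : Type*) [CommRing k] {m : ℕ} (nj : Fin m → ℕ) : ℕ :=
  sInf {d | AlgGenLE k nj d}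

/-- The norm `N_j = ∏_{i=0}^{p-1} σ^i (x_{1,j})`. -/
noncomputable def normJ (k : Type*) [CommRing k] {m : ℕ} (nj : Fin m → ℕ) (p : ℕ)
    (j : Fin m) (h0 : 0 < nj j) : MvPolynomial (Idx m nj) k :=
  ∏ i ∈ Finset.range p, (sigmaAct k nj)^[i] (X ⟨j, ⟨0, h0⟩⟩)


section Aux

variable {k : Type*} [CommRing k] {m : ℕ} {nj : Fin m → ℕ}

lemma sigmaAct_isHomogeneous {q : MvPolynomial (Idx m nj) k} {d : ℕ}
    (hq : q.IsHomogeneous d) : (sigmaAct k nj q).IsHomogeneous d := by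
  have hg : ∀ v : Idx m nj, (X (R := k) v +
      if h : v.2.1 + 1 < nj v.1 then X (⟨v.1, ⟨v.2.1 + 1, h⟩⟩ : Idx m nj) else 0).IsHomogeneous 1 := by
    intro v
    split
    · exact (isHomogeneous_X _ _).add (isHomogeneous_X _ _)
    · simpa using isHomogeneous_X k v
  have h := hq.aeval _ hg
  simpa [sigmaAct] using h

lemma homogeneousComponent_sigmaAct (d : ℕ) (q : MvPolynomial (Idx m nj) k) :
    homogeneousComponent d (sigmaAct k nj q) = sigmaAct k nj (homogeneousComponent d q) := by
  conv_lhs => rw [← sum_homogeneousComponent q]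
  rw [map_sum, map_sum]
  have key : ∀ i ∈ Finset.range (q.totalDegree + 1),
      homogeneousComponent d (sigmaAct k nj (homogeneousComponent i q)) =
        if d = i then sigmaAct k nj (homogeneousComponent i q) else 0 := by
    intro i _
    exact homogeneousComponent_of_mem
      ((mem_homogeneousSubmodule _ _).2
        (sigmaAct_isHomogeneous (homogeneousComponent_isHomogeneous i q)))
  rw [Finset.sum_congr rfl key, Finset.sum_ite_eq]
  split
  · rfl
  · rename_i h
    rw [homogeneousComponent_eq_zero, map_zero]
    simp only [Finset.mem_range] at h
    omega

lemma homogeneousComponent_mul_homog {q g : MvPolynomial (Idx m nj) k} {a : ℕ}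
    (hq : q.IsHomogeneous a) (e : ℕ) :
    homogeneousComponent e (q * g) =
      if a ≤ e then q * homogeneousComponent (e - a) g else 0 := by
  conv_lhs => rw [← sum_homogeneousComponent g]
  rw [Finset.mul_sum, map_sum]
  have key : ∀ i ∈ Finset.range (g.totalDegree + 1),
      homogeneousComponent e (q * homogeneousComponent i g) =
        if e = a + i then q * homogeneousComponent i g else 0 := by
    intro i _
    exact homogeneousComponent_of_mem
      ((mem_homogeneousSubmodule _ _).2 (hq.mul (homogeneousComponent_isHomogeneous i g)))
  rw [Finset.sum_congr rfl key]
  by_cases hae : a ≤ e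
  · rw [if_pos hae]
    have key2 : ∀ i ∈ Finset.range (g.totalDegree + 1),
        (if e = a + i then q * homogeneousComponent i g else 0) =
          if e - a = i then q * homogeneousComponent i g else 0 := by
      intro i _
      by_cases h : e = a + i
      · rw [if_pos h, if_pos (by omega)]
      · rw [if_neg h, if_neg (by omega)]
    rw [Finset.sum_congr rfl key2, Finset.sum_ite_eq]
    split
    · rfl
    · rename_i h
      rw [homogeneousComponent_eq_zero, mul_zero]
      simp only [Finset.mem_range] at h
      omega
  · rw [if_neg hae]
    exact Finset.sum_eq_zero fun i _ => if_neg (by omega)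

lemma sigmaW_apply_last {n : ℕ} (hn : 0 < n) (v : Fin n → k) :
    sigmaW k n v ⟨n - 1, by omega⟩ = v ⟨n - 1, by omega⟩ := by
  rw [sigmaW, Matrix.toLin'_apply]
  show ∑ b, sigmaWMat k n ⟨n - 1, by omega⟩ b * v b = _
  rw [Finset.sum_eq_single (⟨n - 1, by omega⟩ : Fin n)]
  · simp [sigmaWMat]
  · intro b _ hb
    have hbv : b.1 ≠ n - 1 := fun hh => hb (Fin.ext hh)
    have hlt := b.isLt
    have hle : ¬ ((⟨n - 1, by omega⟩ : Fin n) ≤ b) := fun hcon =>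
      absurd (show n - 1 ≤ b.1 from hcon) (by omega)
    simp [sigmaWMat, hle]
  · simp

lemma sigmaW_fixed_last {n : ℕ} (hn : 2 ≤ n) (v : Fin n → k)
    (hv : sigmaW k n v = v) : v ⟨n - 1, by omega⟩ = 0 := by
  have ha := congrFun hv ⟨n - 2, by omega⟩
  rw [sigmaW, Matrix.toLin'_apply] at ha
  have hsum : (sigmaWMat k n).mulVec v ⟨n - 2, by omega⟩
      = v ⟨n - 2, by omega⟩ - v ⟨n - 1, by omega⟩ := by
    show ∑ b, sigmaWMat k n ⟨n - 2, by omega⟩ b * v b = _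
    have hterm : ∀ b : Fin n, sigmaWMat k n ⟨n - 2, by omega⟩ b * v b
        = (if (⟨n - 2, by omega⟩ : Fin n) = b then v b else 0)
          + (if (⟨n - 1, by omega⟩ : Fin n) = b then -v b else 0) := by
      intro b
      by_cases h2 : (⟨n - 2, by omega⟩ : Fin n) = b
      · have hne : (⟨n - 1, by omega⟩ : Fin n) ≠ b := by
          rw [← h2]
          intro hc
          have : n - 1 = n - 2 := congrArg Fin.val hc
          omega
        rw [if_pos h2, if_neg hne, ← h2, add_zero]
        have hone : sigmaWMat k n ⟨n - 2, by omega⟩ ⟨n - 2, by omega⟩ = 1 := by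
          simp [sigmaWMat]
        rw [hone, one_mul]
      · by_cases h1 : (⟨n - 1, by omega⟩ : Fin n) = b
        · rw [if_neg h2, if_pos h1, ← h1, zero_add]
          have hle : (⟨n - 2, by omega⟩ : Fin n) ≤ ⟨n - 1, by omega⟩ :=
            show n - 2 ≤ n - 1 by omega
          have hmone : sigmaWMat k n ⟨n - 2, by omega⟩ ⟨n - 1, by omega⟩ = -1 := by
            simp only [sigmaWMat, if_pos hle]
            rw [show ((⟨n - 1, by omega⟩ : Fin n) : ℕ) - ((⟨n - 2, by omega⟩ : Fin n) : ℕ) = 1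
              from show n - 1 - (n - 2) = 1 by omega, pow_one]
          rw [hmone]
          ring
        · rw [if_neg h2, if_neg h1, add_zero]
          have hb2 : b.1 ≠ n - 2 := fun hh => h2 (Fin.ext hh.symm)
          have hb1 : b.1 ≠ n - 1 := fun hh => h1 (Fin.ext hh.symm)
          have hlt := b.isLt
          have hle : ¬ ((⟨n - 2, by omega⟩ : Fin n) ≤ b) := fun hcon =>
            absurd (show n - 2 ≤ b.1 from hcon) (by omega)
          simp [sigmaWMat, hle]
    rw [Finset.sum_congr rfl (fun b _ => hterm b), Finset.sum_add_distrib,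
      Finset.sum_ite_eq, Finset.sum_ite_eq]
    simp only [Finset.mem_univ, if_pos]
    ring
  rw [hsum] at ha
  exact sub_eq_self.mp ha

lemma constantCoeff_sigmaAct (q : MvPolynomial (Idx m nj) k) :
    constantCoeff (sigmaAct k nj q) = constantCoeff q := by
  induction q using MvPolynomial.induction_on with
  | C c => simp [sigmaAct]
  | add p q hp hq => simp [map_add, hp, hq]
  | mul_X p v hp =>
    rw [map_mul, map_mul, map_mul]
    have hx : constantCoeff (sigmaAct k nj (X v)) = 0 := by
      simp only [sigmaAct, aeval_X]
      split <;> simp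
    simp [hx]

end Aux

/-- Projection `k[V] ⊗ W →ₗ k[V]`, `a ⊗ w ↦ w l • a`. -/
noncomputable def Lmap (k : Type*) [CommRing k] {m : ℕ} (nj : Fin m → ℕ) (n : ℕ) (l : Fin n) :
    (MvPolynomial (Idx m nj) k ⊗[k] (Fin n → k)) →ₗ[k] MvPolynomial (Idx m nj) k :=
  TensorProduct.lift (LinearMap.mk₂ k (fun a w => w l • a)
    (fun a a' w => smul_add _ _ _)
    (fun c a w => smul_comm _ _ _)
    (fun a w w' => by simp [add_smul])
    (fun c a w => by simp [Pi.smul_apply, smul_eq_mul, mul_smul]))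

/-- `k[V] ⊗ W →ₗ W`, `a ⊗ w ↦ (constant term of a) • w`. -/
noncomputable def Emap (k : Type*) [CommRing k] {m : ℕ} (nj : Fin m → ℕ) (n : ℕ) :
    (MvPolynomial (Idx m nj) k ⊗[k] (Fin n → k)) →ₗ[k] (Fin n → k) :=
  TensorProduct.lift (LinearMap.mk₂ k (fun a w => constantCoeff a • w)
    (fun a a' w => by rw [map_add, add_smul])
    (fun c a w => by rw [constantCoeff_smul, smul_eq_mul, mul_smul])
    (fun a w w' => smul_add _ _ _)
    (fun c a w => smul_comm _ _ _))

section Aux2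

variable {k : Type*} [CommRing k] {m : ℕ} {nj : Fin m → ℕ}

lemma Lmap_tmul (n : ℕ) (l : Fin n) (a : MvPolynomial (Idx m nj) k) (w : Fin n → k) :
    Lmap k nj n l (a ⊗ₜ[k] w) = w l • a := rfl

lemma Emap_tmul (n : ℕ) (a : MvPolynomial (Idx m nj) k) (w : Fin n → k) :
    Emap k nj n (a ⊗ₜ[k] w) = constantCoeff a • w := rfl

lemma Lmap_smul (n : ℕ) (l : Fin n) (q : MvPolynomial (Idx m nj) k)
    (x : MvPolynomial (Idx m nj) k ⊗[k] (Fin n → k)) :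
    Lmap k nj n l (q • x) = q * Lmap k nj n l x := by
  induction x using TensorProduct.induction_on with
  | zero => simp
  | tmul a w =>
    rw [smul_tmul', Lmap_tmul, Lmap_tmul, smul_eq_mul]
    exact (mul_smul_comm _ _ _).symm
  | add x y hx hy =>
    rw [smul_add, map_add, map_add, hx, hy, mul_add]

lemma Lmap_sigma (n : ℕ) (hn : 0 < n)
    (x : MvPolynomial (Idx m nj) k ⊗[k] (Fin n → k)) :
    Lmap k nj n ⟨n - 1, by omega⟩ (sigmaCov k nj n x)
      = sigmaAct k nj (Lmap k nj n ⟨n - 1, by omega⟩ x) := by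
  induction x using TensorProduct.induction_on with
  | zero => simp
  | tmul a w =>
    rw [sigmaCov, TensorProduct.map_tmul, Lmap_tmul, Lmap_tmul]
    rw [show (sigmaW k n) w ⟨n - 1, by omega⟩ = w ⟨n - 1, by omega⟩ from
      sigmaW_apply_last hn w]
    exact (map_smul (sigmaAct k nj) _ _).symm
  | add x y hx hy =>
    simp [map_add, hx, hy]

lemma Emap_sigma (n : ℕ)
    (x : MvPolynomial (Idx m nj) k ⊗[k] (Fin n → k)) :
    Emap k nj n (sigmaCov k nj n x) = sigmaW k n (Emap k nj n x) := by
  induction x using TensorProduct.induction_on with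
  | zero => simp
  | tmul a w =>
    rw [sigmaCov, TensorProduct.map_tmul, Emap_tmul, Emap_tmul]
    dsimp only [AlgHom.toLinearMap_apply]
    rw [constantCoeff_sigmaAct]
    exact (map_smul (sigmaW k n) _ _).symm
  | add x y hx hy =>
    simp [map_add, hx, hy]

lemma Lmap_constantCoeff (n : ℕ) (l : Fin n)
    (x : MvPolynomial (Idx m nj) k ⊗[k] (Fin n → k)) :
    constantCoeff (Lmap k nj n l x) = Emap k nj n x l := by
  induction x using TensorProduct.induction_on with
  | zero => simp
  | tmul a w =>
    rw [Lmap_tmul, Emap_tmul, constantCoeff_smul]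
    simp [smul_eq_mul, mul_comm]
  | add x y hx hy =>
    rw [map_add, map_add, map_add, hx, hy]
    rfl

end Aux2


/-- Lemma `lb`. If `Δ^{p-1}(f)` is an indecomposable homogeneous
transfer, then the transfer covariant `Δ^{p-n}(f)w_1 + ⋯ + Δ^{p-1}(f)w_n` is
indecomposable. -/
theorem stmt10 (p : ℕ) (hp : p.Prime) (k : Type*) [Field k] [CharP k p]
    {m : ℕ} (nj : Fin m → ℕ) (hnj : ∀ j, 1 ≤ nj j ∧ nj j ≤ p)
    (n : ℕ) (hn : 2 ≤ n) (hnp : n ≤ p)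
    (f : MvPolynomial (Idx m nj) k) (e : ℕ)
    (hhom : MvPolynomial.IsHomogeneous (((Del k nj) ^ (p - 1)) f) e)
    (hindec : ((Del k nj) ^ (p - 1)) f ∉ Algebra.adjoin k
      {g | g ∈ invar k nj ∧ ∃ e' < e, MvPolynomial.IsHomogeneous g e'}) :
    ¬ IsDecomposableCov k nj n (transferCov k nj n p n f) := by
  intro hdec
  apply hindec
  have h2n : (2:ℕ) ≤ n := hn
  have hl1 : n - 1 < n := by omega
  set l : Fin n := ⟨n - 1, hl1⟩ with hl
  set S : Set (MvPolynomial (Idx m nj) k) :=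
    {g | g ∈ invar k nj ∧ ∃ e' < e, MvPolynomial.IsHomogeneous g e'} with hS
  have main : transferCov k nj n p n f ∈ Submodule.comap
      ((homogeneousComponent e).comp (Lmap k nj n l))
      (Subalgebra.toSubmodule (Algebra.adjoin k S)) := by
    refine Submodule.span_le.mpr ?_ hdec
    rintro y ⟨q, x, hq, ⟨d, hd0, hqd⟩, hx, rfl⟩
    have hx' : sigmaCov k nj n x = x := hx
    have hq' : sigmaAct k nj q = q := hq
    simp only [SetLike.mem_coe, Submodule.mem_comap, LinearMap.coe_comp, Function.comp_apply,
      Subalgebra.mem_toSubmodule]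
    rw [Lmap_smul, homogeneousComponent_mul_homog hqd]
    have hginv : sigmaAct k nj (Lmap k nj n l x) = Lmap k nj n l x := by
      rw [← Lmap_sigma n (by omega) x]
      exact congrArg _ hx'
    by_cases hde : d ≤ e
    · rw [if_pos hde]
      rcases eq_or_lt_of_le hde with rfl | hlt
      · rw [Nat.sub_self, homogeneousComponent_zero]
        have hcc : constantCoeff (Lmap k nj n l x) = 0 := by
          rw [Lmap_constantCoeff]
          have hfix : sigmaW k n (Emap k nj n x) = Emap k nj n x := by
            rw [← Emap_sigma n x, hx']
          exact sigmaW_fixed_last h2n _ hfix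
        rw [show coeff 0 (Lmap k nj n l x) = 0 from hcc, map_zero, mul_zero]
        exact zero_mem _
      · have hqS : q ∈ S := ⟨hq, d, hlt, hqd⟩
        have hgS : homogeneousComponent (e - d) (Lmap k nj n l x) ∈ S := by
          refine ⟨?_, e - d, by omega, homogeneousComponent_isHomogeneous _ _⟩
          show sigmaAct k nj _ = _
          rw [← homogeneousComponent_sigmaAct, hginv]
          rfl
        exact mul_mem (Algebra.subset_adjoin hqS) (Algebra.subset_adjoin hgS)
    · rw [if_neg hde]
      exact zero_mem _
  simp only [Submodule.mem_comap, LinearMap.coe_comp, Function.comp_apply,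
    Subalgebra.mem_toSubmodule] at main
  have hLh : Lmap k nj n l (transferCov k nj n p n f) = ((Del k nj) ^ (p - 1)) f := by
    rw [transferCov, map_sum, Finset.sum_eq_single l]
    · rw [Lmap_tmul]
      simp only [Pi.single_eq_same]
      rw [if_pos (show ((l : Fin n) : ℕ) < n from l.isLt), one_smul]
      congr 1
      rw [show p - n + ((l : Fin n) : ℕ) = p - 1 from by
        have : ((l : Fin n) : ℕ) = n - 1 := rfl
        omega]
    · intro b _ hb
      rw [Lmap_tmul, Pi.single_eq_of_ne (Ne.symm hb), zero_smul]
    · intro hnot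
      exact absurd (Finset.mem_univ l) hnot
  rw [hLh, homogeneousComponent_of_mem ((mem_homogeneousSubmodule _ _).2 hhom),
    if_pos rfl] at main
  exact main
end

section
/- Let G be cyclic of prime order p, k of characteristic p, and V a finite-dimensional kG-module with dual variable x whose norm is N = Π_{k=0}^{p-1} σ^k(x). Then any f ∈ k[V]^G can be written as f = qN + r with q ∈ k[V]^G and r ∈ B^G, where B is the G-stable complement of N·k[V] spanned by monomials of x-degree < p. -/
open MvPolynomial TensorProduct

section Aux
variable (k : Type*) [CommRing k] {m : ℕ} (nj : Fin m → ℕ)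

lemma sigmaAct_X (v : Idx m nj) : sigmaAct k nj (X v) =
    X v + if h : v.2.1 + 1 < nj v.1 then X ⟨v.1, ⟨v.2.1 + 1, h⟩⟩ else 0 := by
  simp [sigmaAct]

/-- `c t = x_{t,j}` (or 0 out of range). -/
noncomputable def cvar (j : Fin m) (t : ℕ) : MvPolynomial (Idx m nj) k :=
  if h : t < nj j then X ⟨j, ⟨t, h⟩⟩ else 0

lemma sigma_cvar (j : Fin m) (t : ℕ) :
    sigmaAct k nj (cvar k nj j t) = cvar k nj j t + cvar k nj j (t + 1) := by
  by_cases h : t < nj j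
  · simp only [cvar, dif_pos h, sigmaAct_X]
  · have h' : ¬ (t + 1 < nj j) := by omega
    simp [cvar, dif_neg h, dif_neg h']

lemma iterate_sigma_cvar (j : Fin m) (i t : ℕ) :
    (sigmaAct k nj)^[i] (cvar k nj j t) =
      ∑ s ∈ Finset.range (i + 1), (i.choose s) • cvar k nj j (t + s) := by
  induction i with
  | zero => simp
  | succ n ih =>
    rw [Function.iterate_succ_apply', ih, map_sum]
    simp only [map_nsmul, sigma_cvar, smul_add, Finset.sum_add_distrib]
    rw [Finset.sum_range_succ' (fun s => (n+1).choose s • cvar k nj j (t + s)) (n+1)]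
    simp only [Nat.choose_succ_succ, add_smul, Finset.sum_add_distrib, Nat.choose_zero_right,
      one_smul, add_zero]
    rw [Finset.sum_range_succ' (fun s => n.choose s • cvar k nj j (t + s)) n]
    rw [Finset.sum_range_succ (fun s => n.choose (s+1) • cvar k nj j (t + (s+1))) n]
    simp only [Nat.choose_succ_self, zero_smul, add_zero, Nat.choose_zero_right, one_smul]
    have : ∀ s, t + s + 1 = t + (s + 1) := by omega
    simp only [this]
    abel
end Aux

section B
variable (p : ℕ) (k : Type*) [Field k] [CharP k p]
  {m : ℕ} (nj : Fin m → ℕ)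

lemma iterate_p_cvar (hp : p.Prime) [CharP k p] (j : Fin m) (hle : nj j ≤ p) :
    (sigmaAct k nj)^[p] (cvar k nj j 0) = cvar k nj j 0 := by
  obtain ⟨t, rfl⟩ : ∃ t, p = t + 1 := ⟨p - 1, by have := hp.pos; omega⟩
  rw [iterate_sigma_cvar]
  rw [Finset.sum_range_succ' (fun s => (t+1).choose s • cvar k nj j (0 + s)) (t+1)]
  rw [Finset.sum_range_succ (fun s => (t+1).choose (s+1) • cvar k nj j (0 + (s+1))) t]
  have h1 : ∀ s ∈ Finset.range t,
      ((t+1).choose (s+1)) • cvar k nj j (0 + (s + 1)) = 0 := by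
    intro s hs
    simp only [Finset.mem_range] at hs
    have hd : (t+1) ∣ (t+1).choose (s+1) := hp.dvd_choose_self (by omega) (by omega)
    rw [← Nat.cast_smul_eq_nsmul k, (CharP.cast_eq_zero_iff k (t+1) _).2 hd, zero_smul]
  rw [Finset.sum_eq_zero h1]
  have h2 : cvar k nj j (t + 1) = 0 := by
    rw [cvar, dif_neg (by omega)]
  simp [h2]

lemma sigma_normJ (hp : p.Prime) (j : Fin m) (h0 : 0 < nj j) (hle : nj j ≤ p) :
    sigmaAct k nj (normJ k nj p j h0) = normJ k nj p j h0 := by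
  have hx : (X ⟨j, ⟨0, h0⟩⟩ : MvPolynomial (Idx m nj) k) = cvar k nj j 0 := by
    rw [cvar, dif_pos h0]
  rw [normJ, map_prod]
  have key : ∀ i ∈ Finset.range p, sigmaAct k nj ((sigmaAct k nj)^[i] (X ⟨j, ⟨0, h0⟩⟩)) =
      (sigmaAct k nj)^[i+1] (X ⟨j, ⟨0, h0⟩⟩) := fun i _ =>
    (Function.iterate_succ_apply' _ i _).symm
  rw [Finset.prod_congr rfl key]
  have hcancel : (∏ i ∈ Finset.range p, (sigmaAct k nj)^[i+1] (X ⟨j, ⟨0, h0⟩⟩)) *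
      (sigmaAct k nj)^[0] (X ⟨j, ⟨0, h0⟩⟩) =
      (∏ i ∈ Finset.range p, (sigmaAct k nj)^[i] (X ⟨j, ⟨0, h0⟩⟩)) *
      (sigmaAct k nj)^[p] (X ⟨j, ⟨0, h0⟩⟩) := by
    rw [← Finset.prod_range_succ' (fun i => (sigmaAct k nj)^[i] (X ⟨j, ⟨0, h0⟩⟩)) p,
      ← Finset.prod_range_succ (fun i => (sigmaAct k nj)^[i] (X ⟨j, ⟨0, h0⟩⟩)) p]
  have hps : (sigmaAct k nj)^[p] (X ⟨j, ⟨0, h0⟩⟩) = X ⟨j, ⟨0, h0⟩⟩ := by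
    rw [hx]; exact iterate_p_cvar p k nj hp j hle
  rw [hps] at hcancel
  simp only [Function.iterate_zero_apply] at hcancel
  exact mul_right_cancel₀ (X_ne_zero _) hcancel
end B

section C
variable (k : Type*) [Field k] {m : ℕ} (nj : Fin m → ℕ) (j : Fin m) (h0 : 0 < nj j)

lemma degreeOf_sigmaX_le (v : Idx m nj) :
    degreeOf ⟨j, ⟨0, h0⟩⟩ (sigmaAct k nj (X v)) ≤ if v = ⟨j, ⟨0, h0⟩⟩ then 1 else 0 := by
  classical
  rw [sigmaAct_X]
  refine (degreeOf_add_le _ _ _).trans ?_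
  have h1 : degreeOf ⟨j, ⟨0, h0⟩⟩ (X v : MvPolynomial (Idx m nj) k) =
      if v = ⟨j, ⟨0, h0⟩⟩ then 1 else 0 := by
    rw [degreeOf_X]
    by_cases h : v = ⟨j, ⟨0, h0⟩⟩ <;> simp [h, eq_comm]
  have h2 : degreeOf ⟨j, ⟨0, h0⟩⟩
      (if h : v.2.1 + 1 < nj v.1 then (X ⟨v.1, ⟨v.2.1 + 1, h⟩⟩ : MvPolynomial (Idx m nj) k)
        else 0) = 0 := by
    split
    · rw [degreeOf_X, if_neg]
      intro h
      have := congrArg (fun w : Idx m nj => (w.2 : ℕ)) h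
      simp at this
    · simp
  rw [h1, h2]
  simp

lemma degreeOf_sigma_monomial_le (s : Idx m nj →₀ ℕ) (a : k) :
    degreeOf ⟨j, ⟨0, h0⟩⟩ (sigmaAct k nj (monomial s a)) ≤ s ⟨j, ⟨0, h0⟩⟩ := by
  classical
  rw [monomial_eq, map_mul, algHom_C, MvPolynomial.algebraMap_eq, Finsupp.prod, map_prod]
  refine (degreeOf_mul_le _ _ _).trans ?_
  rw [degreeOf_C, zero_add]
  refine (degreeOf_prod_le _ _ _).trans ?_
  calc ∑ v ∈ s.support, degreeOf ⟨j, ⟨0, h0⟩⟩ (sigmaAct k nj (X v ^ s v))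
      ≤ ∑ v ∈ s.support, s v * (if v = ⟨j, ⟨0, h0⟩⟩ then 1 else 0) :=
        Finset.sum_le_sum (fun v _ => (map_pow (sigmaAct k nj) (X v) (s v)) ▸
          (degreeOf_pow_le _ _ _).trans (Nat.mul_le_mul_left _ (degreeOf_sigmaX_le k nj j h0 v)))
    _ ≤ ∑ v ∈ s.support, (if v = ⟨j, ⟨0, h0⟩⟩ then s ⟨j, ⟨0, h0⟩⟩ else 0) :=
        Finset.sum_le_sum (fun v _ => by by_cases h : v = ⟨j, ⟨0, h0⟩⟩ <;> simp [h])
    _ ≤ s ⟨j, ⟨0, h0⟩⟩ := by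
        rw [Finset.sum_ite_eq' s.support]
        split <;> simp

lemma degreeOf_sigma_le (g : MvPolynomial (Idx m nj) k) :
    degreeOf ⟨j, ⟨0, h0⟩⟩ (sigmaAct k nj g) ≤ degreeOf ⟨j, ⟨0, h0⟩⟩ g := by
  classical
  have e1 : sigmaAct k nj g = ∑ s ∈ g.support, sigmaAct k nj (monomial s (coeff s g)) := by
    rw [← map_sum, ← g.as_sum]
  rw [e1]
  have e2 := MvPolynomial.degreeOf_sum_le (R := k) (⟨j, ⟨0, h0⟩⟩ : Idx m nj) g.support
    (fun s => sigmaAct k nj (monomial s (coeff s g)))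
  refine e2.trans (Finset.sup_le (fun s hs => ?_))
  refine (degreeOf_sigma_monomial_le k nj j h0 s _).trans ?_
  rw [degreeOf_eq_sup]
  exact Finset.le_sup (f := fun t : Idx m nj →₀ ℕ => t ⟨j, ⟨0, h0⟩⟩) hs
end C

section D
variable (k : Type*) [Field k] {m : ℕ} (nj : Fin m → ℕ) (j : Fin m) (h0 : 0 < nj j)

/-- The variable isomorphism splitting off `x_{0,j}`. -/
noncomputable def phiEquiv :
    MvPolynomial (Idx m nj) k ≃ₐ[k]
      Polynomial (MvPolynomial {v : Idx m nj // v ≠ ⟨j, ⟨0, h0⟩⟩} k) :=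
  (renameEquiv k (Equiv.optionSubtypeNe (⟨j, ⟨0, h0⟩⟩ : Idx m nj)).symm).trans
    (optionEquivLeft k _)

lemma phiEquiv_X0 : phiEquiv k nj j h0 (X ⟨j, ⟨0, h0⟩⟩) = Polynomial.X := by
  simp [phiEquiv, renameEquiv_apply, rename_X, Equiv.optionSubtypeNe_symm_self,
    optionEquivLeft_X_none]

lemma phiEquiv_X_ne (v : Idx m nj) (h : v ≠ ⟨j, ⟨0, h0⟩⟩) :
    phiEquiv k nj j h0 (X v) = Polynomial.C (X ⟨v, h⟩) := by
  simp [phiEquiv, renameEquiv_apply, rename_X, Equiv.optionSubtypeNe_symm_of_ne h,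
    optionEquivLeft_X_some]

lemma phiEquiv_rename (c : MvPolynomial {v : Idx m nj // v ≠ ⟨j, ⟨0, h0⟩⟩} k) :
    phiEquiv k nj j h0 (rename Subtype.val c) = Polynomial.C c := by
  induction c using MvPolynomial.induction_on with
  | C a =>
    rw [rename_C]
    have : (C a : MvPolynomial (Idx m nj) k) = algebraMap k _ a := rfl
    rw [this, AlgEquiv.commutes, Polynomial.algebraMap_apply, MvPolynomial.algebraMap_eq]
  | add f g hf hg => rw [map_add, map_add, hf, hg, map_add]
  | mul_X f u hf =>
    rw [map_mul, rename_X, map_mul, hf, phiEquiv_X_ne k nj j h0 u.1 u.2, Subtype.eta, ← map_mul]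

/-- The span of monomials of `x_{0,j}`-degree `< p`. -/
noncomputable def Bspan (p : ℕ) : Submodule k (MvPolynomial (Idx m nj) k) :=
  Submodule.span k {g : MvPolynomial (Idx m nj) k | ∃ s : Idx m nj →₀ ℕ,
    s ⟨j, ⟨0, h0⟩⟩ < p ∧ g = MvPolynomial.monomial s 1}

/-- The submodule of polynomials of `x_{0,j}`-degree `< p`. -/
noncomputable def degLTsub (p : ℕ) (hp0 : 0 < p) :
    Submodule k (MvPolynomial (Idx m nj) k) where
  carrier := {g | degreeOf ⟨j, ⟨0, h0⟩⟩ g < p}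
  zero_mem' := by simp [hp0]
  add_mem' := fun {a b} ha hb => lt_of_le_of_lt (degreeOf_add_le _ a b) (max_lt ha hb)
  smul_mem' := fun c g hg => by
    have hle : degreeOf ⟨j, ⟨0, h0⟩⟩ (c • g) ≤ degreeOf ⟨j, ⟨0, h0⟩⟩ g := by
      rw [smul_eq_C_mul]
      exact (degreeOf_mul_le _ _ _).trans (by simp [degreeOf_C])
    exact lt_of_le_of_lt hle hg

lemma mem_Bspan_iff (p : ℕ) (hp0 : 0 < p) (g : MvPolynomial (Idx m nj) k) :
    g ∈ Bspan k nj j h0 p ↔ degreeOf ⟨j, ⟨0, h0⟩⟩ g < p := by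
  classical
  constructor
  · intro hg
    have hle : Bspan k nj j h0 p ≤ degLTsub k nj j h0 p hp0 := by
      refine Submodule.span_le.2 ?_
      rintro _ ⟨s, hs, rfl⟩
      show degreeOf ⟨j, ⟨0, h0⟩⟩ (monomial s (1:k)) < p
      rw [degreeOf_monomial_eq s _ (one_ne_zero)]
      exact hs
    exact hle hg
  · intro hg
    rw [g.as_sum]
    refine Submodule.sum_mem _ (fun s hs => ?_)
    have : (monomial s (coeff s g) : MvPolynomial (Idx m nj) k)
        = (coeff s g) • monomial s 1 := by
      rw [smul_monomial, smul_eq_mul, mul_one]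
    rw [this]
    refine Submodule.smul_mem _ _ (Submodule.subset_span ?_)
    exact ⟨s, (degreeOf_lt_iff hp0).1 hg s hs, rfl⟩

lemma phi_Bspan {p : ℕ} {g : MvPolynomial (Idx m nj) k} (hg : g ∈ Bspan k nj j h0 p) :
    (phiEquiv k nj j h0 g).degree < (p : WithBot ℕ) := by
  classical
  have : Bspan k nj j h0 p ≤ Submodule.comap
      ((phiEquiv k nj j h0).toLinearMap)
      ((Polynomial.degreeLT (MvPolynomial {v : Idx m nj // v ≠ ⟨j, ⟨0, h0⟩⟩} k) p).restrictScalars k) := by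
    refine Submodule.span_le.2 ?_
    rintro _ ⟨s, hs, rfl⟩
    simp only [SetLike.mem_coe, Submodule.mem_comap, AlgEquiv.toLinearMap_apply,
      Submodule.restrictScalars_mem, Polynomial.mem_degreeLT]
    have hnat : (phiEquiv k nj j h0 (monomial s 1)).natDegree ≤ s ⟨j, ⟨0, h0⟩⟩ := by
      rw [monomial_eq, map_one, one_mul, Finsupp.prod, map_prod]
      refine (Polynomial.natDegree_prod_le _ _).trans ?_
      calc ∑ v ∈ s.support, (phiEquiv k nj j h0 (X v ^ s v)).natDegree
          ≤ ∑ v ∈ s.support, s v * (if v = ⟨j, ⟨0, h0⟩⟩ then 1 else 0) := by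
            refine Finset.sum_le_sum (fun v _ => ?_)
            rw [map_pow]
            refine (Polynomial.natDegree_pow_le).trans ?_
            refine Nat.mul_le_mul_left _ ?_
            by_cases h : v = ⟨j, ⟨0, h0⟩⟩
            · subst h; rw [phiEquiv_X0, if_pos rfl, Polynomial.natDegree_X]
            · rw [phiEquiv_X_ne k nj j h0 v h, if_neg h, Polynomial.natDegree_C]
        _ ≤ ∑ v ∈ s.support, (if v = ⟨j, ⟨0, h0⟩⟩ then s ⟨j, ⟨0, h0⟩⟩ else 0) :=
            Finset.sum_le_sum (fun v _ => by by_cases h : v = ⟨j, ⟨0, h0⟩⟩ <;> simp [h])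
        _ ≤ s ⟨j, ⟨0, h0⟩⟩ := by
            rw [Finset.sum_ite_eq' s.support]
            split <;> simp
    calc (phiEquiv k nj j h0 (monomial s 1)).degree
        ≤ ((phiEquiv k nj j h0 (monomial s 1)).natDegree : WithBot ℕ) :=
          Polynomial.degree_le_natDegree
      _ < (p : WithBot ℕ) := by exact_mod_cast lt_of_le_of_lt hnat hs
  have h2 := this hg
  rw [Submodule.mem_comap, Submodule.restrictScalars_mem] at h2
  simp only [AlgEquiv.toLinearMap_apply] at h2
  exact Polynomial.mem_degreeLT.1 h2

lemma Bspan_of_degree_lt {p : ℕ} (hp0 : 0 < p)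
    (r' : Polynomial (MvPolynomial {v : Idx m nj // v ≠ ⟨j, ⟨0, h0⟩⟩} k))
    (hr' : r'.degree < (p : WithBot ℕ)) :
    (phiEquiv k nj j h0).symm r' ∈ Bspan k nj j h0 p := by
  classical
  have hnat : r'.natDegree < p := by
    by_cases h : r' = 0
    · simpa [h] using hp0
    · exact (Polynomial.natDegree_lt_iff_degree_lt h).2 hr'
  have hsum : (phiEquiv k nj j h0).symm r' =
      ∑ i ∈ Finset.range p, rename Subtype.val (r'.coeff i) * X ⟨j, ⟨0, h0⟩⟩ ^ i := by
    apply (phiEquiv k nj j h0).injective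
    rw [AlgEquiv.apply_symm_apply, map_sum]
    conv_lhs => rw [r'.as_sum_range' p hnat]
    refine Finset.sum_congr rfl (fun i _ => ?_)
    rw [map_mul, map_pow, phiEquiv_rename, phiEquiv_X0, Polynomial.C_mul_X_pow_eq_monomial]
  rw [hsum]
  refine Submodule.sum_mem _ (fun i hi => ?_)
  simp only [Finset.mem_range] at hi
  -- expand the coefficient polynomial into monomials
  set c := r'.coeff i with hc
  rw [c.as_sum, map_sum, Finset.sum_mul]
  refine Submodule.sum_mem _ (fun d hd => ?_)
  rw [rename_monomial, X_pow_eq_monomial, monomial_mul, mul_one]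
  have hmem : (Finsupp.mapDomain Subtype.val d + Finsupp.single (⟨j, ⟨0, h0⟩⟩ : Idx m nj) i)
      (⟨j, ⟨0, h0⟩⟩ : Idx m nj) < p := by
    rw [Finsupp.add_apply, Finsupp.mapDomain_notin_range, Finsupp.single_eq_same, zero_add]
    · exact hi
    · rintro ⟨u, hu⟩
      exact u.2 hu
  have : (monomial (Finsupp.mapDomain Subtype.val d +
        Finsupp.single (⟨j, ⟨0, h0⟩⟩ : Idx m nj) i) (coeff d c) : MvPolynomial (Idx m nj) k)
      = (coeff d c) • monomial (Finsupp.mapDomain Subtype.val d +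
        Finsupp.single (⟨j, ⟨0, h0⟩⟩ : Idx m nj) i) (1:k) := by
    rw [smul_monomial, smul_eq_mul, mul_one]
  rw [this]
  exact Submodule.smul_mem _ _ (Submodule.subset_span ⟨_, hmem, rfl⟩)
end D

section E
variable (k : Type*) [Field k] {m : ℕ} (nj : Fin m → ℕ) (j : Fin m) (h0 : 0 < nj j)

/-- The constants appearing in `σ^i x`. -/
noncomputable def csub (t : ℕ) :
    MvPolynomial {v : Idx m nj // v ≠ ⟨j, ⟨0, h0⟩⟩} k :=
  if h : t + 1 < nj j then
    X ⟨⟨j, ⟨t + 1, h⟩⟩, fun he => by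
      have := congrArg (fun w : Idx m nj => (w.2 : ℕ)) he
      simp at this⟩
  else 0

lemma phi_cvar_succ (t : ℕ) :
    phiEquiv k nj j h0 (cvar k nj j (t + 1)) = Polynomial.C (csub k nj j h0 t) := by
  rw [cvar, csub]
  split
  · rw [phiEquiv_X_ne]
  · simp

lemma phi_iterate (i : ℕ) :
    phiEquiv k nj j h0 ((sigmaAct k nj)^[i] (X ⟨j, ⟨0, h0⟩⟩)) =
      Polynomial.X + Polynomial.C
        (∑ s ∈ Finset.range i, i.choose (s + 1) • csub k nj j h0 s) := by
  have hx : (X ⟨j, ⟨0, h0⟩⟩ : MvPolynomial (Idx m nj) k) = cvar k nj j 0 := by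
    rw [cvar, dif_pos h0]
  rw [hx, iterate_sigma_cvar]
  rw [Finset.sum_range_succ' (fun s => i.choose s • cvar k nj j (0 + s)) i]
  rw [map_add, map_sum]
  have h1 : ∀ s ∈ Finset.range i,
      phiEquiv k nj j h0 (i.choose (s + 1) • cvar k nj j (0 + (s + 1))) =
        Polynomial.C (i.choose (s + 1) • csub k nj j h0 s) := by
    intro s _
    rw [map_nsmul, zero_add, phi_cvar_succ, map_nsmul]
  rw [Finset.sum_congr rfl h1, ← map_sum]
  have h2 : phiEquiv k nj j h0 (i.choose 0 • cvar k nj j (0 + 0)) = Polynomial.X := by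
    rw [map_nsmul, Nat.choose_zero_right, one_smul]
    rw [show cvar k nj j (0 + 0) = cvar k nj j 0 from rfl, ← hx, phiEquiv_X0]
  rw [h2, add_comm]

lemma phi_norm (p : ℕ) :
    phiEquiv k nj j h0 (normJ k nj p j h0) =
      ∏ i ∈ Finset.range p, (Polynomial.X + Polynomial.C
        (∑ s ∈ Finset.range i, i.choose (s + 1) • csub k nj j h0 s)) := by
  rw [normJ, map_prod]
  exact Finset.prod_congr rfl (fun i _ => phi_iterate k nj j h0 i)

lemma phi_norm_monic (p : ℕ) : (phiEquiv k nj j h0 (normJ k nj p j h0)).Monic := by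
  rw [phi_norm]
  exact Polynomial.monic_prod_of_monic _ _ (fun i _ => Polynomial.monic_X_add_C _)

lemma phi_norm_degree (p : ℕ) :
    (phiEquiv k nj j h0 (normJ k nj p j h0)).degree = (p : WithBot ℕ) := by
  have hm := phi_norm_monic k nj j h0 p
  rw [Polynomial.degree_eq_natDegree hm.ne_zero]
  rw [phi_norm]
  rw [Polynomial.natDegree_prod _ _ (fun i _ => (Polynomial.monic_X_add_C _).ne_zero)]
  have hs : ∑ i ∈ Finset.range p, (Polynomial.X + Polynomial.C
      (∑ s ∈ Finset.range i, i.choose (s + 1) • csub k nj j h0 s)).natDegree = p := by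
    rw [Finset.sum_congr rfl (fun i _ => Polynomial.natDegree_X_add_C _)]
    simp
  rw [hs]
end E


/-- Any invariant `f` can be written `f = qN + r` with `q`
invariant and `r` an invariant lying in the span `B` of monomials of
`x_{1,j}`-degree `< p`. -/
theorem stmt16 (p : ℕ) (hp : p.Prime) (k : Type*) [Field k] [CharP k p]
    {m : ℕ} (nj : Fin m → ℕ) (hnj : ∀ j, 1 ≤ nj j ∧ nj j ≤ p)
    (j : Fin m)
    (f : MvPolynomial (Idx m nj) k) (hf : f ∈ invar k nj) :
    ∃ q r, q ∈ invar k nj ∧ r ∈ invar k nj ∧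
      r ∈ Submodule.span k
        {g : MvPolynomial (Idx m nj) k | ∃ s : Idx m nj →₀ ℕ,
          s ⟨j, ⟨0, by have := (hnj j).1; omega⟩⟩ < p ∧
          g = MvPolynomial.monomial s 1} ∧
      f = q * normJ k nj p j (by have := (hnj j).1; omega) + r := by
  have h0 : 0 < nj j := by have := (hnj j).1; omega
  have hle : nj j ≤ p := (hnj j).2
  have hp0 : 0 < p := hp.pos
  set φ := phiEquiv k nj j h0 with hφ
  set N := normJ k nj p j h0 with hN
  have hfInv : sigmaAct k nj f = f := (AlgHom.mem_equalizer _ _ f).1 hf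
  have hNInv : sigmaAct k nj N = N := sigma_normJ p k nj hp j h0 hle
  have hmonic := phi_norm_monic k nj j h0 p
  have hdegN := phi_norm_degree k nj j h0 p
  rw [← hN, ← hφ] at hmonic hdegN
  set q : MvPolynomial (Idx m nj) k := φ.symm (φ f /ₘ φ N) with hqdef
  set r : MvPolynomial (Idx m nj) k := φ.symm (φ f %ₘ φ N) with hrdef
  have hfeq : f = q * N + r := by
    apply φ.injective
    rw [map_add, map_mul, hqdef, hrdef, AlgEquiv.apply_symm_apply, AlgEquiv.apply_symm_apply]
    linear_combination (Polynomial.modByMonic_add_div (φ f) (φ N)).symm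
  have hrB : r ∈ Bspan k nj j h0 p := by
    rw [hrdef]
    exact Bspan_of_degree_lt k nj j h0 hp0 _
      ((Polynomial.degree_modByMonic_lt (φ f) hmonic).trans_le hdegN.le)
  have hσrB : sigmaAct k nj r ∈ Bspan k nj j h0 p :=
    (mem_Bspan_iff k nj j h0 p hp0 _).2 ((degreeOf_sigma_le k nj j h0 r).trans_lt
      ((mem_Bspan_iff k nj j h0 p hp0 r).1 hrB))
  have e1 : sigmaAct k nj q * N + sigmaAct k nj r = q * N + r := by
    calc sigmaAct k nj q * N + sigmaAct k nj r
        = sigmaAct k nj (q * N + r) := by rw [map_add, map_mul, hNInv]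
      _ = sigmaAct k nj f := by rw [← hfeq]
      _ = f := hfInv
      _ = q * N + r := hfeq
  have e2 : (q - sigmaAct k nj q) * N = sigmaAct k nj r - r := by linear_combination -e1
  have hq : sigmaAct k nj q = q := by
    by_contra hne
    have hd : q - sigmaAct k nj q ≠ 0 := fun h => hne (by linear_combination -h)
    have hφd : φ (q - sigmaAct k nj q) ≠ 0 := fun h => hd (by
      have := congrArg φ.symm h
      rwa [AlgEquiv.symm_apply_apply, map_zero] at this)
    have hL : (φ ((q - sigmaAct k nj q) * N)).degree =
        (φ (q - sigmaAct k nj q)).degree + (p : WithBot ℕ) := by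
      rw [map_mul, Polynomial.degree_mul, hdegN]
    have hR : (φ (sigmaAct k nj r - r)).degree < (p : WithBot ℕ) := by
      rw [map_sub]
      exact lt_of_le_of_lt (Polynomial.degree_sub_le _ _)
        (max_lt (phi_Bspan k nj j h0 hσrB) (phi_Bspan k nj j h0 hrB))
    rw [e2] at hL
    have hge : (p : WithBot ℕ) ≤ (φ (q - sigmaAct k nj q)).degree + (p : WithBot ℕ) :=
      le_add_of_nonneg_left (Polynomial.zero_le_degree_iff.2 hφd)
    rw [← hL] at hge
    exact absurd (lt_of_le_of_lt hge hR) (lt_irrefl _)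
  have hr : sigmaAct k nj r = r := by
    have := e1
    rw [hq] at this
    exact add_left_cancel this
  exact ⟨q, r, (AlgHom.mem_equalizer _ _ q).2 hq, (AlgHom.mem_equalizer _ _ r).2 hr, hrB, hfeq⟩
end
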